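/- arXiv:1901.02272 — 2 statements merged into one kernel-verified Lean document; each statement's English description precedes it below -/
import Mathlib

section
/- Let w ∈ ℤ^n, c ∈ ℤ₊^n with w·c = 0, and define S₋, S₀, S₊ as the sets of x ∈ {0,1}^n_3 with w·x negative, zero, positive respectively, and d := c + ∑_{x∈S₊} x. If there exists H ⊆ {0,1}^n_3 with ∑_{x∈H} x = d, then G := H ∩ S₀ satisfies ∑_{x∈G} x = c. -/
open Finset

/-- The set of 0-1 vectors in ℤ^n with exactly `k` ones. -/
def cube (n k : ℕ) : Finset (Fin n → ℤ) :=
  ((Finset.univ : Finset (Fin n → Fin 2)).image (fun f i => ((f i : ℕ) : ℤ))).filter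
    (fun x => ∑ i, x i = (k : ℤ))

/-- Standard inner product on ℤ^n. -/
def dot {n : ℕ} (w x : Fin n → ℤ) : ℤ := ∑ i, w i * x i

lemma dot_sum {n : ℕ} (w : Fin n → ℤ) (s : Finset (Fin n → ℤ)) :
    dot w (∑ x ∈ s, x) = ∑ x ∈ s, dot w x := by
  unfold dot
  rw [Finset.sum_comm]
  simp [Finset.mul_sum]

lemma dot_add {n : ℕ} (w x y : Fin n → ℤ) :
    dot w (x + y) = dot w x + dot w y := by
  unfold dot
  simp [mul_add, Finset.sum_add_distrib]

theorem stmt_5 (n : ℕ) (w c : Fin n → ℤ) (hc : ∀ i, 0 ≤ c i) (hwc : dot w c = 0)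
    (H : Finset (Fin n → ℤ)) (hH : H ⊆ cube n 3)
    (hHd : ∑ x ∈ H, x = c + ∑ x ∈ (cube n 3).filter (fun x => 0 < dot w x), x) :
    ∑ x ∈ H ∩ (cube n 3).filter (fun x => dot w x = 0), x = c := by
  set Sp := (cube n 3).filter (fun x => 0 < dot w x) with hSp
  have key : ∑ x ∈ H, dot w x = ∑ x ∈ Sp, dot w x := by
    rw [← dot_sum, hHd, dot_add, hwc, dot_sum, zero_add]
  -- split H
  have hsplit : ∑ x ∈ H.filter (fun x => dot w x < 0), dot w x
      + ∑ x ∈ H.filter (fun x => 0 ≤ dot w x), dot w x = ∑ x ∈ H, dot w x := by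
    simpa using Finset.sum_filter_add_sum_filter_not H (fun x => dot w x < 0) (dot w)
  have hsub : H.filter (fun x => 0 < dot w x) ⊆ Sp :=
    Finset.filter_subset_filter _ hH
  have hB : ∑ x ∈ H.filter (fun x => 0 < dot w x), dot w x ≤ ∑ x ∈ Sp, dot w x :=
    Finset.sum_le_sum_of_subset_of_nonneg hsub (fun x hx _ => le_of_lt (Finset.mem_filter.1 hx).2)
  have hsplit2 : ∑ x ∈ H.filter (fun x => 0 ≤ dot w x), dot w x
      = ∑ x ∈ (H.filter (fun x => 0 ≤ dot w x)).filter (fun x => dot w x = 0), dot w x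
      + ∑ x ∈ (H.filter (fun x => 0 ≤ dot w x)).filter (fun x => ¬ dot w x = 0), dot w x :=
    (Finset.sum_filter_add_sum_filter_not _ (fun x => dot w x = 0) (dot w)).symm
  have hzero : ∑ x ∈ (H.filter (fun x => 0 ≤ dot w x)).filter (fun x => dot w x = 0), dot w x = 0 :=
    Finset.sum_eq_zero (fun x hx => (Finset.mem_filter.1 hx).2)
  have hfe : (H.filter (fun x => 0 ≤ dot w x)).filter (fun x => ¬ dot w x = 0)
      = H.filter (fun x => 0 < dot w x) := by
    ext x
    simp only [Finset.mem_filter]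
    constructor
    · rintro ⟨⟨hx, h1⟩, h2⟩
      exact ⟨hx, lt_of_le_of_ne h1 (Ne.symm h2)⟩
    · rintro ⟨hx, h1⟩
      exact ⟨⟨hx, le_of_lt h1⟩, ne_of_gt h1⟩
  have hA : ∑ x ∈ H.filter (fun x => dot w x < 0), dot w x = 0 := by
    have h1 : ∑ x ∈ H.filter (fun x => 0 ≤ dot w x), dot w x ≤ ∑ x ∈ Sp, dot w x := by
      rw [hsplit2, hzero, zero_add, hfe]; exact hB
    have h2 : ∑ x ∈ H.filter (fun x => dot w x < 0), dot w x ≤ 0 :=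
      Finset.sum_nonpos (fun x hx => le_of_lt (Finset.mem_filter.1 hx).2)
    omega
  have hAempty : H.filter (fun x => dot w x < 0) = ∅ := by
    by_contra h
    obtain ⟨x, hx⟩ := Finset.nonempty_of_ne_empty h
    have : ∑ x ∈ H.filter (fun x => dot w x < 0), dot w x < 0 :=
      Finset.sum_neg (fun y hy => (Finset.mem_filter.1 hy).2) ⟨x, hx⟩
    omega
  -- now B = sum over Sp
  have hBeq : ∑ x ∈ H.filter (fun x => 0 < dot w x), dot w x = ∑ x ∈ Sp, dot w x := by
    have := hsplit
    rw [hAempty] at this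
    simp only [Finset.sum_empty, zero_add] at this
    rw [hsplit2, hzero, zero_add, hfe] at this
    omega
  have hHpSp : H.filter (fun x => 0 < dot w x) = Sp := by
    by_contra h
    have hss : H.filter (fun x => 0 < dot w x) ⊂ Sp := lt_of_le_of_ne hsub h
    obtain ⟨x, hxSp, hxH⟩ := Finset.exists_of_ssubset hss
    have : ∑ y ∈ H.filter (fun x => 0 < dot w x), dot w y < ∑ y ∈ Sp, dot w y := by
      apply Finset.sum_lt_sum_of_subset hsub hxSp hxH (Finset.mem_filter.1 hxSp).2
      exact fun y hy _ => le_of_lt (Finset.mem_filter.1 hy).2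
    omega
  -- vector sums
  have hG : H ∩ (cube n 3).filter (fun x => dot w x = 0) = H.filter (fun x => dot w x = 0) := by
    ext x
    simp only [Finset.mem_inter, Finset.mem_filter]
    constructor
    · rintro ⟨hx, _, h2⟩; exact ⟨hx, h2⟩
    · rintro ⟨hx, h2⟩; exact ⟨hx, hH hx, h2⟩
  have hvsplit : ∑ x ∈ H, x = ∑ x ∈ H.filter (fun x => dot w x = 0), x
      + ∑ x ∈ H.filter (fun x => ¬ dot w x = 0), x :=
    (Finset.sum_filter_add_sum_filter_not H (fun x => dot w x = 0) _).symm
  have hne : H.filter (fun x => ¬ dot w x = 0) = Sp := by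
    rw [← hHpSp]
    ext x
    simp only [Finset.mem_filter]
    constructor
    · rintro ⟨hx, h1⟩
      rcases lt_trichotomy (dot w x) 0 with h | h | h
      · have hmem : x ∈ H.filter (fun x => dot w x < 0) := Finset.mem_filter.2 ⟨hx, h⟩
        rw [hAempty] at hmem
        exact absurd hmem (Finset.notMem_empty x)
      · exact absurd h h1
      · exact ⟨hx, h⟩
    · rintro ⟨hx, h1⟩
      exact ⟨hx, ne_of_gt h1⟩
  rw [hG]
  have := hHd
  rw [hvsplit, hne] at this
  exact add_right_cancel this
end

section
/- If d ∈ ℤ₊^n is the degree sequence of a graph on [n] with d₁ ≥ d₂ ≥ ... ≥ d_n, then for all 1 ≤ j ≤ l ≤ n, the inequality ∑_{i=1}^j d_i − ∑_{i=l+1}^n d_i ≤ j(l−1) holds. -/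
open Finset

lemma cube_entry {n k : ℕ} {x : Fin n → ℤ} (hx : x ∈ cube n k) (i : Fin n) :
    x i = 0 ∨ x i = 1 := by
  simp only [cube, mem_filter, mem_image, mem_univ, true_and] at hx
  obtain ⟨⟨f, rfl⟩, _⟩ := hx
  have h2 : (f i : ℕ) < 2 := (f i).2
  have h3 : (f i : ℕ) = 0 ∨ (f i : ℕ) = 1 := by omega
  rcases h3 with h | h <;> simp [h]

lemma cube_sum {n k : ℕ} {x : Fin n → ℤ} (hx : x ∈ cube n k) : ∑ i, x i = (k : ℤ) := by
  simp only [cube, mem_filter] at hx; exact hx.2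

lemma card_filter_lt (n j : ℕ) (h : j ≤ n) :
    ((univ : Finset (Fin n)).filter (fun i : Fin n => (i : ℕ) < j)).card = j := by
  have he : (univ : Finset (Fin n)).filter (fun i : Fin n => (i : ℕ) < j)
      = (Finset.range j).attachFin (fun m hm => lt_of_lt_of_le (Finset.mem_range.mp hm) h) := by
    ext i
    simp [Finset.mem_attachFin]
  rw [he, Finset.card_attachFin, Finset.card_range]

/-- two edges sharing both endpoints are equal -/
lemma cube_unique {n : ℕ} {x y : Fin n → ℤ} (hx : x ∈ cube n 2) (hy : y ∈ cube n 2)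
    (i k : Fin n) (hik : i ≠ k) (hxi : x i = 1) (hxk : x k = 1) (hyi : y i = 1)
    (hyk : y k = 1) : x = y := by
  have key : ∀ z : Fin n → ℤ, z ∈ cube n 2 → z i = 1 → z k = 1 → ∀ m, m ≠ i → m ≠ k → z m = 0 := by
    intro z hz hzi hzk m hmi hmk
    rcases cube_entry hz m with h | h
    · exact h
    · exfalso
      have hsub : ({i, k, m} : Finset (Fin n)) ⊆ univ := subset_univ _
      have hsum : ∑ r ∈ ({i, k, m} : Finset (Fin n)), z r ≤ ∑ r, z r := by
        apply Finset.sum_le_sum_of_subset_of_nonneg hsub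
        intro r _ _
        rcases cube_entry hz r with h' | h' <;> omega
      rw [cube_sum hz] at hsum
      rw [Finset.sum_insert (by simp [hik, (Ne.symm hmi)]),
        Finset.sum_insert (by simp [(Ne.symm hmk)]), Finset.sum_singleton] at hsum
      rw [hzi, hzk, h] at hsum
      norm_num at hsum
  funext m
  by_cases hmi : m = i
  · subst hmi; rw [hxi, hyi]
  by_cases hmk : m = k
  · subst hmk; rw [hxk, hyk]
  rw [key x hx hxi hxk m hmi hmk, key y hy hyi hyk m hmi hmk]

theorem stmt_14 (n : ℕ) (d : Fin n → ℤ) (H : Finset (Fin n → ℤ)) (hH : H ⊆ cube n 2)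
    (hd : ∑ x ∈ H, x = d) (hsort : ∀ i j : Fin n, i ≤ j → d j ≤ d i) :
    ∀ j l : ℕ, 1 ≤ j → j ≤ l → l ≤ n →
      (∑ i ∈ Finset.univ.filter (fun i : Fin n => (i : ℕ) < j), d i) -
        (∑ i ∈ Finset.univ.filter (fun i : Fin n => l ≤ (i : ℕ)), d i) ≤
      (j : ℤ) * ((l : ℤ) - 1) := by
  intro j l hj hjl hln
  set A : Finset (Fin n) := univ.filter (fun i : Fin n => (i : ℕ) < j) with hA
  set B : Finset (Fin n) := univ.filter (fun i : Fin n => l ≤ (i : ℕ)) with hB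
  set C : Finset (Fin n) := univ.filter (fun i : Fin n => (i : ℕ) < l) with hC
  have hdi : ∀ i, d i = ∑ x ∈ H, x i := by
    intro i; rw [← hd]; simp
  -- rewrite LHS as sum over edges
  have hswap : (∑ i ∈ A, d i) - (∑ i ∈ B, d i)
      = ∑ x ∈ H, ((∑ i ∈ A, x i) - (∑ i ∈ B, x i)) := by
    rw [Finset.sum_sub_distrib]
    congr 1 <;> (simp_rw [hdi]; rw [Finset.sum_comm])
  rw [hswap]
  -- per-edge bound
  have hAC : A ⊆ C := by
    intro i hi; simp only [hA, hC, mem_filter] at *; exact ⟨hi.1, lt_of_lt_of_le hi.2 hjl⟩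
  have step1 : ∀ x ∈ H, (∑ i ∈ A, x i) - (∑ i ∈ B, x i)
      ≤ ∑ i ∈ A, x i * ∑ k ∈ C.erase i, x k := by
    intro x hx
    have hx' := hH hx
    have hentry := cube_entry hx'
    have hcb : (∑ i ∈ C, x i) + (∑ i ∈ B, x i) = 2 := by
      have h2 := cube_sum hx'
      rw [show ((2:ℤ)) = ((2:ℕ):ℤ) by norm_num, ← h2]
      rw [← Finset.sum_union]
      · congr 1
        ext i
        simp only [hC, hB, mem_union, mem_filter, mem_univ, true_and, iff_true]
        exact lt_or_ge (i : ℕ) l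
      · rw [hC, hB, Finset.disjoint_filter]
        intro i _ h1
        exact not_le.mpr h1
    have ha0 : 0 ≤ ∑ i ∈ A, x i := by
      apply Finset.sum_nonneg; intro i _; rcases hentry i with h|h <;> rw [h] <;> norm_num
    have hb0 : 0 ≤ ∑ i ∈ B, x i := by
      apply Finset.sum_nonneg; intro i _; rcases hentry i with h|h <;> rw [h] <;> norm_num
    have hab : (∑ i ∈ A, x i) ≤ ∑ i ∈ C, x i := by
      apply Finset.sum_le_sum_of_subset_of_nonneg hAC
      intro r _ _; rcases hentry r with h|h <;> rw [h] <;> norm_num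
    have hrhs : ∑ i ∈ A, x i * ∑ k ∈ C.erase i, x k
        = (∑ i ∈ A, x i) * (1 - ∑ i ∈ B, x i) := by
      have : ∀ i ∈ A, x i * ∑ k ∈ C.erase i, x k = x i * (2 - (∑ i ∈ B, x i)) - x i := by
        intro i hi
        rw [Finset.sum_erase_eq_sub (hAC hi)]
        have hxi2 : x i * x i = x i := by rcases hentry i with h|h <;> rw [h] <;> ring
        have : (∑ k ∈ C, x k) = 2 - (∑ i ∈ B, x i) := by linarith
        rw [this]; ring_nf; nlinarith [hxi2]
      rw [Finset.sum_congr rfl this, Finset.sum_sub_distrib, ← Finset.sum_mul]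
      ring
    rw [hrhs]
    set a := ∑ i ∈ A, x i
    set b := ∑ i ∈ B, x i
    have : a + b ≤ 2 := by linarith
    nlinarith [mul_nonneg hb0 (sub_nonneg.mpr (show a ≤ 2 by linarith)), hb0, ha0]
  refine le_trans (Finset.sum_le_sum step1) ?_
  -- swap sums and bound each ∑_{x∈H} x i * x k by 1
  rw [Finset.sum_comm]
  have step2 : ∀ i ∈ A, (∑ x ∈ H, x i * ∑ k ∈ C.erase i, x k) ≤ (l : ℤ) - 1 := by
    intro i hiA
    have : (∑ x ∈ H, x i * ∑ k ∈ C.erase i, x k)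
        = ∑ k ∈ C.erase i, ∑ x ∈ H, x i * x k := by
      rw [Finset.sum_comm]
      congr 1; ext x; rw [Finset.mul_sum]
    rw [this]
    have hcard : (C.erase i).card = l - 1 := by
      rw [Finset.card_erase_of_mem (hAC hiA), hC, card_filter_lt n l hln]
    have hbound : ∀ k ∈ C.erase i, (∑ x ∈ H, x i * x k) ≤ 1 := by
      intro k hk
      have hik : i ≠ k := (Finset.ne_of_mem_erase hk).symm
      set S := H.filter (fun x => x i = 1 ∧ x k = 1) with hS
      have hsplit : (∑ x ∈ H, x i * x k) = ∑ x ∈ S, x i * x k := by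
        rw [hS, Finset.sum_filter]
        apply Finset.sum_congr rfl
        intro x hx
        rcases cube_entry (hH hx) i with h|h <;> rcases cube_entry (hH hx) k with h'|h' <;>
          simp [h, h']
      rw [hsplit]
      have : ∀ x ∈ S, x i * x k = 1 := by
        intro x hx; rw [hS, mem_filter] at hx; rw [hx.2.1, hx.2.2]; ring
      rw [Finset.sum_congr rfl this, Finset.sum_const, nsmul_eq_mul, mul_one]
      have : S.card ≤ 1 := by
        apply Finset.card_le_one.mpr
        intro x hx y hy
        rw [hS, mem_filter] at hx hy
        exact cube_unique (hH hx.1) (hH hy.1) i k hik hx.2.1 hx.2.2 hy.2.1 hy.2.2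
      exact_mod_cast this
    calc ∑ k ∈ C.erase i, ∑ x ∈ H, x i * x k ≤ ∑ _k ∈ C.erase i, (1:ℤ) :=
          Finset.sum_le_sum hbound
      _ = ((C.erase i).card : ℤ) := by rw [Finset.sum_const, nsmul_eq_mul, mul_one]
      _ = (l : ℤ) - 1 := by rw [hcard]; have : 1 ≤ l := le_trans hj hjl; push_cast [Nat.cast_sub this]; ring
  calc ∑ i ∈ A, ∑ x ∈ H, x i * ∑ k ∈ C.erase i, x k ≤ ∑ _i ∈ A, ((l:ℤ) - 1) :=
        Finset.sum_le_sum step2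
    _ = (A.card : ℤ) * ((l:ℤ) - 1) := by rw [Finset.sum_const, nsmul_eq_mul]
    _ = (j : ℤ) * ((l : ℤ) - 1) := by rw [hA, card_filter_lt n j (le_trans hjl hln)]
end
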